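/- Let n ≥ 2, β ∈ (0,1), α = 1 + β, and 0 < s₁ < s₂. Let (v_m) be a sequence of continuously differentiable functions on a neighborhood of the closed annulus {x : s₁ ≤ |x| ≤ s₂} in ℝⁿ such that v_m and ∇v_m converge uniformly on the closed annulus to v₀ and ∇v₀ respectively, where v₀ is continuously differentiable there. If ∫_{s₁}^{s₂} R^{-(1+2(α−1))} [ ∫_{S^{n-1}} (∂_ν v_m(Rθ) − α v_m(Rθ)/R)² dθ ] dR → 0 as m → ∞, then ∂_ν v₀(x) = α v₀(x)/|x| for every x in the open annulus {x : s₁ < |x| < s₂}; consequently v₀(tx) = t^α v₀(x) whenever x, tx lie in the annulus with t > 0. -/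

import Mathlib

open MeasureTheory Metric Set Filter
open scoped RealInnerProductSpace Topology Classical

noncomputable section

/-- Integral over the unit sphere `S^{n-1}` in `ℝⁿ` with its standard surface measure. -/
def sphInt (n : ℕ) (f : EuclideanSpace ℝ (Fin n) → ℝ) : ℝ :=
  ∫ θ : sphere (0 : EuclideanSpace ℝ (Fin n)) 1,
    f (θ : EuclideanSpace ℝ (Fin n)) ∂((volume : Measure (EuclideanSpace ℝ (Fin n))).toSphere)

/-- The Weiss-type monotonicity quantity
`A(R) = R^{-(n+2(α-1))} ∫_{B_R} |∇u|² - α ∫_{S^{n-1}} (u(Rθ)/R^α)²`. -/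
def Afun (n : ℕ) (α : ℝ) (u : EuclideanSpace ℝ (Fin n) → ℝ) (R : ℝ) : ℝ :=
  R ^ (-((n : ℝ) + 2 * (α - 1))) *
      (∫ x in ball (0 : EuclideanSpace ℝ (Fin n)) R, ‖gradient u x‖ ^ 2)
    - α * sphInt n (fun θ => (u (R • θ) / R ^ α) ^ 2)

/-- The α-homogeneous extension `w_R(x) = (|x|/R)^α u(R x/|x|)`, with `w_R 0 = 0`. -/
def homExt (n : ℕ) (α R : ℝ) (u : EuclideanSpace ℝ (Fin n) → ℝ)
    (x : EuclideanSpace ℝ (Fin n)) : ℝ :=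
  if x = 0 then 0 else (‖x‖ / R) ^ α * u ((R / ‖x‖) • x)

/-- The α-rescaling `u_R(x) = u(Rx)/R^α`. -/
def rescale (n : ℕ) (α : ℝ) (u : EuclideanSpace ℝ (Fin n) → ℝ) (R : ℝ)
    (x : EuclideanSpace ℝ (Fin n)) : ℝ :=
  u (R • x) / R ^ α

open scoped Pointwise in
lemma toSphere_pos_of_isOpen {E : Type*} [NormedAddCommGroup E] [NormedSpace ℝ E]
    [MeasurableSpace E] [BorelSpace E] [FiniteDimensional ℝ E]
    (μ : Measure E) [μ.IsAddHaarMeasure]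
    {s : Set (sphere (0:E) 1)} (hs : IsOpen s) (hne : s.Nonempty) :
    0 < μ.toSphere s := by
  obtain ⟨θ₀, hθ₀⟩ := hne
  have hnt : Nontrivial E := by
    refine nontrivial_of_ne (θ₀ : E) 0 ?_
    have h1 : ‖(θ₀ : E)‖ = 1 := by
      have := θ₀.2
      rwa [mem_sphere_zero_iff_norm] at this
    intro h; rw [h] at h1; simp at h1
  set r1 : Ioi (0:ℝ) := ⟨1, by norm_num⟩ with hr1
  rw [μ.toSphere_apply' hs.measurableSet]
  have key := μ.toSphere_apply_aux s r1
  have hr1c : ((r1 : ℝ)) = 1 := rfl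
  rw [hr1c] at key
  rw [← key]
  have hopen : IsOpen (Subtype.val ''
      (homeomorphUnitSphereProd E ⁻¹' (s ×ˢ Iio r1))) := by
    apply (isOpen_compl_singleton).isOpenMap_subtype_val
    apply (homeomorphUnitSphereProd E).continuous.isOpen_preimage
    apply hs.prod
    have h2 : (Iio r1) = Subtype.val ⁻¹' (Iio (1:ℝ)) := by
      ext x
      simp only [mem_Iio, mem_preimage]
      exact Iff.rfl
    rw [h2]
    exact isOpen_Iio.preimage continuous_subtype_val
  have hne' : (Subtype.val ''
      (homeomorphUnitSphereProd E ⁻¹' (s ×ˢ Iio r1))).Nonempty := by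
    refine ⟨_, mem_image_of_mem _ (?_ :
      ((homeomorphUnitSphereProd E).symm (θ₀, ⟨1/2, by norm_num⟩)) ∈ _)⟩
    simp only [mem_preimage, Homeomorph.apply_symm_apply]
    refine ⟨hθ₀, ?_⟩
    show (⟨1/2, by norm_num⟩ : Ioi (0:ℝ)) < r1
    rw [← Subtype.coe_lt_coe, hr1c]
    norm_num
  have hpos := hopen.measure_pos μ hne'
  exact ENNReal.mul_pos
    (by simpa using (Module.finrank_pos (R := ℝ) (M := E)).ne') hpos.ne'

lemma key_vanish {n : ℕ} {α s₁ s₂ : ℝ} (hα0 : 0 < α) (hs₁ : 0 < s₁) (hs : s₁ < s₂)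
    (v : ℕ → EuclideanSpace ℝ (Fin n) → ℝ) (v₀ : EuclideanSpace ℝ (Fin n) → ℝ)
    (hvm : ∀ m : ℕ, ∃ V : Set (EuclideanSpace ℝ (Fin n)), IsOpen V ∧
      {x : EuclideanSpace ℝ (Fin n) | s₁ ≤ ‖x‖ ∧ ‖x‖ ≤ s₂} ⊆ V ∧ ContDiffOn ℝ 1 (v m) V)
    (hunif : TendstoUniformlyOn (fun m => v m) v₀ atTop
      {x : EuclideanSpace ℝ (Fin n) | s₁ ≤ ‖x‖ ∧ ‖x‖ ≤ s₂})
    (hunif' : TendstoUniformlyOn (fun m => gradient (v m)) (gradient v₀) atTop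
      {x : EuclideanSpace ℝ (Fin n) | s₁ ≤ ‖x‖ ∧ ‖x‖ ≤ s₂})
    (hint : Tendsto (fun m =>
        ∫ R in s₁..s₂, R ^ (-(1 + 2 * (α - 1))) * sphInt n (fun θ =>
          (⟪gradient (v m) (R • θ), θ⟫ - α * v m (R • θ) / R) ^ 2))
      atTop (nhds 0)) :
    ∀ R₀ ∈ Ioo s₁ s₂, ∀ θ₀ : sphere (0 : EuclideanSpace ℝ (Fin n)) 1,
      ⟪gradient v₀ (R₀ • (θ₀ : EuclideanSpace ℝ (Fin n))), (θ₀ : EuclideanSpace ℝ (Fin n))⟫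
        - α * v₀ (R₀ • (θ₀ : EuclideanSpace ℝ (Fin n))) / R₀ = 0 := by
  classical
  set K := {x : EuclideanSpace ℝ (Fin n) | s₁ ≤ ‖x‖ ∧ ‖x‖ ≤ s₂} with hK
  set μS := (volume : Measure (EuclideanSpace ℝ (Fin n))).toSphere with hμS
  set H : (EuclideanSpace ℝ (Fin n) → ℝ) → ℝ × sphere (0 : EuclideanSpace ℝ (Fin n)) 1 → ℝ :=
    fun u p => ⟪gradient u (p.1 • (p.2 : EuclideanSpace ℝ (Fin n))),
        (p.2 : EuclideanSpace ℝ (Fin n))⟫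
      - α * u (p.1 • (p.2 : EuclideanSpace ℝ (Fin n))) / p.1 with hHdef
  set T := Icc s₁ s₂ ×ˢ (univ : Set (sphere (0 : EuclideanSpace ℝ (Fin n)) 1)) with hT
  have hKmem : ∀ R ∈ Icc s₁ s₂, ∀ θ : sphere (0 : EuclideanSpace ℝ (Fin n)) 1,
      R • (θ : EuclideanSpace ℝ (Fin n)) ∈ K := by
    intro R hR θ
    have hθ : ‖(θ : EuclideanSpace ℝ (Fin n))‖ = 1 := mem_sphere_zero_iff_norm.mp θ.2
    have hnrm : ‖R • (θ : EuclideanSpace ℝ (Fin n))‖ = R := by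
      rw [norm_smul, hθ, mul_one, Real.norm_eq_abs, abs_of_pos (hs₁.trans_le hR.1)]
    refine ⟨?_, ?_⟩ <;> rw [hnrm]
    exacts [hR.1, hR.2]
  have hgradcont : ∀ m, ContinuousOn (gradient (v m)) K := by
    intro m
    obtain ⟨V, hVo, hKV, hC1⟩ := hvm m
    have h1 : ContinuousOn (fderiv ℝ (v m)) V := hC1.continuousOn_fderiv_of_isOpen hVo le_rfl
    have h2 : ContinuousOn (fun x =>
        (InnerProductSpace.toDual ℝ (EuclideanSpace ℝ (Fin n))).symm (fderiv ℝ (v m) x)) V :=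
      (InnerProductSpace.toDual ℝ (EuclideanSpace ℝ (Fin n))).symm.continuous.comp_continuousOn h1
    exact h2.mono hKV
  have hvcont : ∀ m, ContinuousOn (v m) K := by
    intro m
    obtain ⟨V, hVo, hKV, hC1⟩ := hvm m
    exact hC1.continuousOn.mono hKV
  have hgrad0cont : ContinuousOn (gradient v₀) K :=
    hunif'.continuousOn (Eventually.of_forall hgradcont).frequently
  have hv0cont : ContinuousOn v₀ K := hunif.continuousOn (Eventually.of_forall hvcont).frequently
  have contH : ∀ u : EuclideanSpace ℝ (Fin n) → ℝ, ContinuousOn u K →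
      ContinuousOn (gradient u) K → ContinuousOn (H u) T := by
    intro u hu hgu
    have hφ : Continuous (fun p : ℝ × sphere (0 : EuclideanSpace ℝ (Fin n)) 1 =>
        p.1 • (p.2 : EuclideanSpace ℝ (Fin n))) :=
      continuous_fst.smul (continuous_subtype_val.comp continuous_snd)
    have hmap : MapsTo (fun p : ℝ × sphere (0 : EuclideanSpace ℝ (Fin n)) 1 =>
        p.1 • (p.2 : EuclideanSpace ℝ (Fin n))) T K := fun p hp => hKmem p.1 hp.1 p.2
    have h1 : ContinuousOn (fun p : ℝ × sphere (0 : EuclideanSpace ℝ (Fin n)) 1 =>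
        gradient u (p.1 • (p.2 : EuclideanSpace ℝ (Fin n)))) T := hgu.comp hφ.continuousOn hmap
    have h2 : ContinuousOn (fun p : ℝ × sphere (0 : EuclideanSpace ℝ (Fin n)) 1 =>
        u (p.1 • (p.2 : EuclideanSpace ℝ (Fin n)))) T := hu.comp hφ.continuousOn hmap
    refine ContinuousOn.sub
      (h1.inner ((continuous_subtype_val.comp continuous_snd).continuousOn)) ?_
    exact (continuousOn_const.mul h2).div continuous_fst.continuousOn
      (fun p hp => (hs₁.trans_le hp.1.1).ne')
  have hHunif : ∀ ε > (0:ℝ), ∀ᶠ m in atTop, ∀ p ∈ T, |H (v m) p - H v₀ p| < ε := by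
    intro ε hε
    have h1 := (Metric.tendstoUniformlyOn_iff.mp hunif') (ε/2) (by positivity)
    have h2 := (Metric.tendstoUniformlyOn_iff.mp hunif) (ε * s₁ / (2*α)) (by positivity)
    filter_upwards [h1, h2] with m h1m h2m p hp
    obtain ⟨R, θ⟩ := p
    have hR : R ∈ Icc s₁ s₂ := hp.1
    have hx : R • (θ : EuclideanSpace ℝ (Fin n)) ∈ K := hKmem R hR θ
    set x := R • (θ : EuclideanSpace ℝ (Fin n)) with hxdef
    have e1 : ‖gradient (v m) x - gradient v₀ x‖ < ε/2 := by
      have := h1m _ hx; rw [dist_eq_norm] at this; rwa [norm_sub_rev]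
    have e2 : |v m x - v₀ x| < ε * s₁ / (2*α) := by
      have := h2m _ hx; rw [Real.dist_eq] at this; rwa [abs_sub_comm]
    have hθn : ‖(θ : EuclideanSpace ℝ (Fin n))‖ = 1 := mem_sphere_zero_iff_norm.mp θ.2
    have hR0 : 0 < R := hs₁.trans_le hR.1
    have heq : H (v m) (R, θ) - H v₀ (R, θ)
        = ⟪gradient (v m) x - gradient v₀ x, (θ : EuclideanSpace ℝ (Fin n))⟫
          - α * (v m x - v₀ x) / R := by
      simp only [hHdef, inner_sub_left]
      ring
    rw [heq]
    have h3 : |⟪gradient (v m) x - gradient v₀ x, (θ : EuclideanSpace ℝ (Fin n))⟫| ≤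
        ‖gradient (v m) x - gradient v₀ x‖ := by
      have := abs_real_inner_le_norm (gradient (v m) x - gradient v₀ x)
        (θ : EuclideanSpace ℝ (Fin n))
      rwa [hθn, mul_one] at this
    have h4 : |α * (v m x - v₀ x) / R| ≤ α * |v m x - v₀ x| / s₁ := by
      rw [abs_div, abs_mul, abs_of_pos hα0, abs_of_pos hR0]
      gcongr
      exact hR.1
    have h5 : α * |v m x - v₀ x| / s₁ < α * (ε * s₁ / (2*α)) / s₁ := by
      gcongr
    have h6 : α * (ε * s₁ / (2*α)) / s₁ = ε/2 := by
      field_simp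
    calc |⟪gradient (v m) x - gradient v₀ x, (θ : EuclideanSpace ℝ (Fin n))⟫
          - α * (v m x - v₀ x) / R|
        ≤ |⟪gradient (v m) x - gradient v₀ x, (θ : EuclideanSpace ℝ (Fin n))⟫|
          + |α * (v m x - v₀ x) / R| := abs_sub _ _
      _ < ε/2 + ε/2 := by
          have := h3.trans_lt e1
          have := h4.trans_lt (h5.trans_eq h6)
          linarith
      _ = ε := by ring
  intro R₀ hR₀ θ₀
  by_contra hne
  set p₀ : ℝ × sphere (0 : EuclideanSpace ℝ (Fin n)) 1 := (R₀, θ₀) with hp₀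
  have hp₀T : p₀ ∈ T := ⟨Ioo_subset_Icc_self hR₀, mem_univ _⟩
  have hne' : H v₀ p₀ ≠ 0 := hne
  set d := |H v₀ p₀| with hd
  have hd0 : 0 < d := abs_pos.mpr hne'
  have hcw := (contH v₀ hv0cont hgrad0cont) p₀ hp₀T
  obtain ⟨δ, hδ0, hδ⟩ := Metric.continuousWithinAt_iff.mp hcw (d/2) (half_pos hd0)
  have hHbig : ∀ p ∈ T, dist p p₀ < δ → d/2 < |H v₀ p| := by
    intro p hp hdist
    have h1 := hδ hp hdist
    rw [Real.dist_eq] at h1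
    have h2 := abs_sub_abs_le_abs_sub (H v₀ p₀) (H v₀ p)
    rw [abs_sub_comm (H v₀ p₀) (H v₀ p)] at h2
    have hdd : d = |H v₀ p₀| := hd
    linarith
  set ε₀ := min δ (min (R₀ - s₁) (s₂ - R₀)) with hε₀def
  have hε₁ : ε₀ ≤ δ := min_le_left _ _
  have hε₂ : ε₀ ≤ R₀ - s₁ := (min_le_right _ _).trans (min_le_left _ _)
  have hε₃ : ε₀ ≤ s₂ - R₀ := (min_le_right _ _).trans (min_le_right _ _)
  have hε₀pos : 0 < ε₀ :=
    lt_min hδ0 (lt_min (by linarith [hR₀.1]) (by linarith [hR₀.2]))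
  set a := R₀ - ε₀/2 with hadef
  set b := R₀ + ε₀/2 with hbdef
  have hab : a < b := by rw [hadef, hbdef]; linarith
  have hs₁a : s₁ ≤ a := by rw [hadef]; linarith
  have hbs₂ : b ≤ s₂ := by rw [hbdef]; linarith
  have ha0 : 0 < a := hs₁.trans_le hs₁a
  have hb0 : 0 < b := ha0.trans hab
  have haIcc : Icc a b ⊆ Icc s₁ s₂ := Icc_subset_Icc hs₁a hbs₂
  set C : Set (sphere (0 : EuclideanSpace ℝ (Fin n)) 1) := Metric.ball θ₀ δ with hC
  have hCpos : 0 < (μS C).toReal := by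
    have h1 : 0 < μS C :=
      toSphere_pos_of_isOpen _ Metric.isOpen_ball ⟨θ₀, Metric.mem_ball_self hδ0⟩
    exact ENNReal.toReal_pos h1.ne' (measure_ne_top _ _)
  have hnear : ∀ R ∈ Icc a b, ∀ θ ∈ C, d/2 < |H v₀ (R, θ)| := by
    intro R hR θ hθ
    apply hHbig (R, θ) ⟨haIcc hR, mem_univ _⟩
    rw [Prod.dist_eq]
    apply max_lt ?_ hθ
    show dist R R₀ < δ
    rw [Real.dist_eq]
    have h1 : |R - R₀| ≤ ε₀/2 := by
      rw [abs_sub_le_iff]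
      constructor
      · have := hR.2; rw [hbdef] at this; linarith
      · have := hR.1; rw [hadef] at this; linarith
    linarith
  set q := -(1 + 2 * (α - 1)) with hq
  set c₁ := (d/4)^2 * (μS C).toReal with hc₁
  have hc₁0 : 0 < c₁ := by positivity
  set c₀ := min (a ^ q) (b ^ q) with hc₀
  have hc₀0 : 0 < c₀ := lt_min (Real.rpow_pos_of_pos ha0 q) (Real.rpow_pos_of_pos hb0 q)
  set e := (b - a) * (c₀ * c₁) with he
  have he0 : 0 < e := mul_pos (sub_pos.mpr hab) (mul_pos hc₀0 hc₁0)
  have hev1 := hHunif (d/4) (by positivity)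
  have hev2 := hint.eventually_lt_const he0
  obtain ⟨m, hm1, hm2⟩ := (hev1.and hev2).exists
  set G : ℝ → ℝ := fun R => sphInt n (fun θ =>
    (⟪gradient (v m) (R • θ), θ⟫ - α * v m (R • θ) / R) ^ 2) with hGdef
  have hm2' : ∫ R in s₁..s₂, R ^ q * G R < e := hm2
  have hGint : ∀ R, G R = ∫ θ : sphere (0 : EuclideanSpace ℝ (Fin n)) 1,
      (H (v m) (R, θ))^2 ∂μS := fun R => rfl
  have hθcont : ∀ R ∈ Icc s₁ s₂,
      Continuous (fun θ : sphere (0 : EuclideanSpace ℝ (Fin n)) 1 => (H (v m) (R, θ))^2) := by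
    intro R hR
    have hψ : Continuous (fun θ : sphere (0 : EuclideanSpace ℝ (Fin n)) 1 =>
        R • (θ : EuclideanSpace ℝ (Fin n))) := continuous_subtype_val.const_smul R
    have hmap : ∀ θ : sphere (0 : EuclideanSpace ℝ (Fin n)) 1,
        R • (θ : EuclideanSpace ℝ (Fin n)) ∈ K := fun θ => hKmem R hR θ
    have h1 : Continuous (fun θ : sphere (0 : EuclideanSpace ℝ (Fin n)) 1 =>
        gradient (v m) (R • (θ : EuclideanSpace ℝ (Fin n)))) :=
      (hgradcont m).comp_continuous hψ hmap
    have h2 : Continuous (fun θ : sphere (0 : EuclideanSpace ℝ (Fin n)) 1 =>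
        v m (R • (θ : EuclideanSpace ℝ (Fin n)))) := (hvcont m).comp_continuous hψ hmap
    exact ((h1.inner continuous_subtype_val).sub
      ((continuous_const.mul h2).div_const R)).pow 2
  have hIntθ : ∀ R ∈ Icc s₁ s₂, Integrable
      (fun θ : sphere (0 : EuclideanSpace ℝ (Fin n)) 1 => (H (v m) (R, θ))^2) μS :=
    fun R hR => (hθcont R hR).integrable_of_hasCompactSupport
      (HasCompactSupport.of_compactSpace _)
  have hGnn : ∀ R, 0 ≤ G R := by
    intro R
    rw [hGint R]
    exact integral_nonneg (fun θ => sq_nonneg _)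
  obtain ⟨M, hM⟩ := ((isCompact_Icc.prod isCompact_univ)).exists_bound_of_continuousOn
    (contH (v m) (hvcont m) (hgradcont m))
  have hGcont : ContinuousOn G (Icc s₁ s₂) := by
    have : ContinuousOn (fun R => ∫ θ : sphere (0 : EuclideanSpace ℝ (Fin n)) 1,
        (H (v m) (R, θ))^2 ∂μS) (Icc s₁ s₂) := by
      apply MeasureTheory.continuousOn_of_dominated (bound := fun _ => M^2)
      · exact fun R hR => (hθcont R hR).aestronglyMeasurable
      · intro R hR
        refine Eventually.of_forall (fun θ => ?_)
        have h := hM (R, θ) ⟨hR, mem_univ _⟩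
        rw [Real.norm_eq_abs] at h ⊢
        calc |(H (v m) (R, θ))^2| = |H (v m) (R, θ)|^2 := by rw [abs_pow, sq_abs, ← sq_abs]
          _ ≤ M^2 := by
              apply pow_le_pow_left₀ (abs_nonneg _) h
      · exact integrable_const _
      · refine Eventually.of_forall (fun θ => ?_)
        have hc := (contH (v m) (hvcont m) (hgradcont m)).pow 2
        have hline : Continuous (fun R : ℝ =>
            (R, θ) : ℝ → ℝ × sphere (0 : EuclideanSpace ℝ (Fin n)) 1) :=
          continuous_id.prodMk continuous_const
        exact hc.comp hline.continuousOn (fun R hR => ⟨hR, mem_univ _⟩)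
    intro R hR
    have := this R hR
    simpa only [← hGint] using this
  have hGlow : ∀ R ∈ Icc a b, c₁ ≤ G R := by
    intro R hR
    have hRs : R ∈ Icc s₁ s₂ := haIcc hR
    have hstep : ∀ θ ∈ C, (d/4)^2 ≤ (H (v m) (R, θ))^2 := by
      intro θ hθ
      have hbig := hnear R hR θ hθ
      have hclose := hm1 (R, θ) ⟨hRs, mem_univ _⟩
      have habs : d/4 ≤ |H (v m) (R, θ)| := by
        have h := abs_sub_abs_le_abs_sub (H v₀ (R, θ)) (H (v m) (R, θ))
        rw [abs_sub_comm (H v₀ (R, θ)) (H (v m) (R, θ))] at h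
        linarith
      calc (d/4)^2 ≤ |H (v m) (R, θ)|^2 := by
            apply pow_le_pow_left₀ (by positivity) habs
        _ = (H (v m) (R, θ))^2 := sq_abs _
    have h1 : (d/4)^2 * (μS C).toReal ≤ ∫ θ in C, (H (v m) (R, θ))^2 ∂μS :=
      setIntegral_ge_of_const_le_real measurableSet_ball (measure_ne_top _ _) hstep
        ((hIntθ R hRs).integrableOn)
    have h2 : ∫ θ in C, (H (v m) (R, θ))^2 ∂μS ≤ ∫ θ, (H (v m) (R, θ))^2 ∂μS :=
      setIntegral_le_integral (hIntθ R hRs) (Eventually.of_forall fun θ => sq_nonneg _)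
    rw [hGint R, hc₁]
    exact h1.trans h2
  have hφcont : ContinuousOn (fun R => R ^ q * G R) (Icc s₁ s₂) :=
    (continuousOn_id.rpow_const (fun x hx => Or.inl (hs₁.trans_le hx.1).ne')).mul hGcont
  have hφint : IntervalIntegrable (fun R => R ^ q * G R) volume s₁ s₂ := by
    apply ContinuousOn.intervalIntegrable
    rwa [uIcc_of_le hs.le]
  have hφintab : IntervalIntegrable (fun R => R ^ q * G R) volume a b := by
    apply ContinuousOn.intervalIntegrable
    rw [uIcc_of_le hab.le]
    exact hφcont.mono haIcc
  have hmono : ∫ R in a..b, R ^ q * G R ≤ ∫ R in s₁..s₂, R ^ q * G R := by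
    apply intervalIntegral.integral_mono_interval hs₁a hab.le hbs₂ ?_ hφint
    refine (ae_restrict_iff' measurableSet_Ioc).mpr (Eventually.of_forall fun R hR => ?_)
    exact mul_nonneg (Real.rpow_nonneg (hs₁.trans hR.1).le q) (hGnn R)
  have hc₀le : ∀ R ∈ Icc a b, c₀ ≤ R ^ q := by
    intro R hR
    rcases le_total 0 q with hq0 | hq0
    · exact (min_le_left _ _).trans (Real.rpow_le_rpow ha0.le hR.1 hq0)
    · exact (min_le_right _ _).trans
        (Real.rpow_le_rpow_of_nonpos (ha0.trans_le hR.1) hR.2 hq0)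
  have hconstle : ∫ _R in a..b, (c₀ * c₁) ≤ ∫ R in a..b, R ^ q * G R := by
    apply intervalIntegral.integral_mono_on hab.le intervalIntegrable_const hφintab
    intro R hR
    exact mul_le_mul (hc₀le R hR) (hGlow R hR) hc₁0.le
      (Real.rpow_nonneg (ha0.trans_le hR.1).le q)
  have hconstval : (∫ _R in a..b, (c₀ * c₁ : ℝ)) = (b - a) * (c₀ * c₁) := by
    rw [intervalIntegral.integral_const, smul_eq_mul]
  have hfinal : e ≤ ∫ R in s₁..s₂, R ^ q * G R := by
    rw [he, ← hconstval]
    exact hconstle.trans hmono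
  linarith


/-- if the defect integrals tend to `0` along a `C¹`-convergent sequence,
then the limit satisfies the radial ODE `∂_ν v₀ = α v₀/|x|` on the open annulus, and is
consequently homogeneous of degree `α` there. -/
theorem limit_is_homogeneous {n : ℕ} (hn : 2 ≤ n) {β α s₁ s₂ : ℝ}
    (hβ : β ∈ Set.Ioo (0 : ℝ) 1) (hα : α = 1 + β) (hs₁ : 0 < s₁) (hs : s₁ < s₂)
    (v : ℕ → EuclideanSpace ℝ (Fin n) → ℝ) (v₀ : EuclideanSpace ℝ (Fin n) → ℝ)
    (hvm : ∀ m : ℕ, ∃ V : Set (EuclideanSpace ℝ (Fin n)), IsOpen V ∧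
      {x : EuclideanSpace ℝ (Fin n) | s₁ ≤ ‖x‖ ∧ ‖x‖ ≤ s₂} ⊆ V ∧ ContDiffOn ℝ 1 (v m) V)
    (hv₀ : ContDiffOn ℝ 1 v₀ {x : EuclideanSpace ℝ (Fin n) | s₁ ≤ ‖x‖ ∧ ‖x‖ ≤ s₂})
    (hunif : TendstoUniformlyOn (fun m => v m) v₀ atTop
      {x : EuclideanSpace ℝ (Fin n) | s₁ ≤ ‖x‖ ∧ ‖x‖ ≤ s₂})
    (hunif' : TendstoUniformlyOn (fun m => gradient (v m)) (gradient v₀) atTop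
      {x : EuclideanSpace ℝ (Fin n) | s₁ ≤ ‖x‖ ∧ ‖x‖ ≤ s₂})
    (hint : Tendsto (fun m =>
        ∫ R in s₁..s₂, R ^ (-(1 + 2 * (α - 1))) * sphInt n (fun θ =>
          (⟪gradient (v m) (R • θ), θ⟫ - α * v m (R • θ) / R) ^ 2))
      atTop (nhds 0)) :
    (∀ x : EuclideanSpace ℝ (Fin n), s₁ < ‖x‖ → ‖x‖ < s₂ →
      ⟪gradient v₀ x, ‖x‖⁻¹ • x⟫ = α * v₀ x / ‖x‖) ∧
    (∀ x : EuclideanSpace ℝ (Fin n), ∀ t : ℝ, 0 < t →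
      s₁ < ‖x‖ → ‖x‖ < s₂ → s₁ < ‖t • x‖ → ‖t • x‖ < s₂ →
      v₀ (t • x) = t ^ α * v₀ x) := by
  have hα0 : 0 < α := by rw [hα]; linarith [hβ.1]
  have key := key_vanish hα0 hs₁ hs v v₀ hvm hunif hunif' hint
  have part1 : ∀ x : EuclideanSpace ℝ (Fin n), s₁ < ‖x‖ → ‖x‖ < s₂ →
      ⟪gradient v₀ x, ‖x‖⁻¹ • x⟫ = α * v₀ x / ‖x‖ := by
    intro x hx1 hx2
    have hx0 : 0 < ‖x‖ := hs₁.trans hx1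
    have hθmem : ‖x‖⁻¹ • x ∈ sphere (0 : EuclideanSpace ℝ (Fin n)) 1 := by
      rw [mem_sphere_zero_iff_norm, norm_smul, norm_inv, norm_norm, inv_mul_cancel₀ hx0.ne']
    have h := key ‖x‖ ⟨hx1, hx2⟩ ⟨‖x‖⁻¹ • x, hθmem⟩
    have hsm : ‖x‖ • (‖x‖⁻¹ • x) = x := by
      rw [smul_smul, mul_inv_cancel₀ hx0.ne', one_smul]
    simp only [hsm] at h
    exact sub_eq_zero.mp h
  refine ⟨part1, ?_⟩
  intro x t ht hx1 hx2 htx1 htx2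
  have hx0 : 0 < ‖x‖ := hs₁.trans hx1
  set θ₀ : EuclideanSpace ℝ (Fin n) := ‖x‖⁻¹ • x with hθ₀def
  have hθn : ‖θ₀‖ = 1 := by
    rw [hθ₀def, norm_smul, norm_inv, norm_norm, inv_mul_cancel₀ hx0.ne']
  have hxeq : ‖x‖ • θ₀ = x := by
    rw [hθ₀def, smul_smul, mul_inv_cancel₀ hx0.ne', one_smul]
  have hUopen : IsOpen {y : EuclideanSpace ℝ (Fin n) | s₁ < ‖y‖ ∧ ‖y‖ < s₂} :=
    (isOpen_lt continuous_const continuous_norm).inter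
      (isOpen_lt continuous_norm continuous_const)
  have hUK : {y : EuclideanSpace ℝ (Fin n) | s₁ < ‖y‖ ∧ ‖y‖ < s₂} ⊆
      {y : EuclideanSpace ℝ (Fin n) | s₁ ≤ ‖y‖ ∧ ‖y‖ ≤ s₂} := fun y hy => ⟨hy.1.le, hy.2.le⟩
  set f : ℝ → ℝ := fun s => v₀ (s • θ₀) with hf
  have hsnorm : ∀ s : ℝ, 0 < s → ‖s • θ₀‖ = s := by
    intro s hs'
    rw [norm_smul, hθn, mul_one, Real.norm_eq_abs, abs_of_pos hs']
  have hder : ∀ s ∈ Ioo s₁ s₂, HasDerivAt f (α * f s / s) s := by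
    intro s hs'
    have hspos : 0 < s := hs₁.trans hs'.1
    have hsmem : s • θ₀ ∈ {y : EuclideanSpace ℝ (Fin n) | s₁ < ‖y‖ ∧ ‖y‖ < s₂} := by
      rw [mem_setOf_eq, hsnorm s hspos]; exact ⟨hs'.1, hs'.2⟩
    have hnbhd : {y : EuclideanSpace ℝ (Fin n) | s₁ ≤ ‖y‖ ∧ ‖y‖ ≤ s₂} ∈ 𝓝 (s • θ₀) :=
      mem_nhds_iff.mpr ⟨_, hUK, hUopen, hsmem⟩
    have hdiff : DifferentiableAt ℝ v₀ (s • θ₀) :=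
      (hv₀.contDiffAt hnbhd).differentiableAt one_ne_zero
    have h2 : HasDerivAt (fun s : ℝ => s • θ₀) θ₀ s := by
      simpa using (hasDerivAt_id s).smul_const θ₀
    have h3 := (hdiff.hasFDerivAt).comp_hasDerivAt s h2
    have h4 : (fderiv ℝ v₀ (s • θ₀)) θ₀ = ⟪gradient v₀ (s • θ₀), θ₀⟫ :=
      (InnerProductSpace.toDual_symm_apply).symm
    have h5 : ⟪gradient v₀ (s • θ₀), θ₀⟫ = α * v₀ (s • θ₀) / s := by
      have h6 := part1 (s • θ₀) (by rw [hsnorm s hspos]; exact hs'.1)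
        (by rw [hsnorm s hspos]; exact hs'.2)
      rw [hsnorm s hspos] at h6
      have h7 : s⁻¹ • (s • θ₀) = θ₀ := by rw [smul_smul, inv_mul_cancel₀ hspos.ne', one_smul]
      rw [h7] at h6
      exact h6
    rw [h4, h5] at h3
    exact h3
  set g : ℝ → ℝ := fun s => f s * s ^ (-α) with hg
  have hgder : ∀ s ∈ Ioo s₁ s₂, HasDerivAt g 0 s := by
    intro s hs'
    have hspos : 0 < s := hs₁.trans hs'.1
    have h6 : HasDerivAt (fun s : ℝ => s ^ (-α)) (-α * s ^ (-α - 1)) s :=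
      Real.hasDerivAt_rpow_const (Or.inl hspos.ne')
    have h7 := (hder s hs').mul h6
    refine h7.congr_deriv ?_
    rw [show (-α - 1) = (-α) - 1 by ring, Real.rpow_sub_one hspos.ne']
    field_simp
    ring
  set r₁ := ‖x‖ with hr₁
  set r₂ := ‖t • x‖ with hr₂
  have hr₂eq : r₂ = t * r₁ := by rw [hr₂, norm_smul, Real.norm_eq_abs, abs_of_pos ht]
  set lo := min r₁ r₂ with hlo
  set hi := max r₁ r₂ with hhi
  have hIccsub : Icc lo hi ⊆ Ioo s₁ s₂ := by
    intro y hy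
    exact ⟨lt_of_lt_of_le (lt_min hx1 htx1) hy.1, lt_of_le_of_lt hy.2 (max_lt hx2 htx2)⟩
  have hconst : ∀ y ∈ Icc lo hi, g y = g lo := by
    apply constant_of_has_deriv_right_zero
    · intro y hy
      exact ((hgder y (hIccsub hy)).continuousAt).continuousWithinAt
    · intro y hy
      exact ((hgder y (hIccsub (Ico_subset_Icc_self hy))).hasDerivWithinAt)
  have hg12 : g r₂ = g r₁ := by
    rw [hconst r₂ ⟨min_le_right _ _, le_max_right _ _⟩,
      hconst r₁ ⟨min_le_left _ _, le_max_left _ _⟩]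
  have hfr₁ : f r₁ = v₀ x := by rw [hf]; simp only; rw [hr₁, hxeq]
  have hfr₂ : f r₂ = v₀ (t • x) := by
    have : r₂ • θ₀ = t • x := by
      rw [hr₂eq, mul_smul, hxeq]
    rw [hf]; simp only; rw [this]
  have hr₁0 : 0 < r₁ := hx0
  have hr₂0 : 0 < r₂ := hs₁.trans htx1
  have halg : v₀ (t • x) * r₂ ^ (-α) = v₀ x * r₁ ^ (-α) := by
    have h8 : f r₂ * r₂ ^ (-α) = f r₁ * r₁ ^ (-α) := hg12
    rwa [hfr₂, hfr₁] at h8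
  have hr : r₂ ^ α = t ^ α * r₁ ^ α := by rw [hr₂eq, Real.mul_rpow ht.le hr₁0.le]
  have h1 : r₁ ^ (-α) * r₁ ^ α = 1 := by
    rw [← Real.rpow_add hr₁0]; simp
  have h2 : r₂ ^ (-α) * r₂ ^ α = 1 := by
    rw [← Real.rpow_add hr₂0]; simp
  calc v₀ (t • x) = v₀ (t • x) * (r₂ ^ (-α) * r₂ ^ α) := by rw [h2, mul_one]
    _ = (v₀ (t • x) * r₂ ^ (-α)) * r₂ ^ α := by ring
    _ = (v₀ x * r₁ ^ (-α)) * r₂ ^ α := by rw [halg]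
    _ = v₀ x * r₁ ^ (-α) * (t ^ α * r₁ ^ α) := by rw [hr]
    _ = t ^ α * v₀ x * (r₁ ^ (-α) * r₁ ^ α) := by ring
    _ = t ^ α * v₀ x := by rw [h1, mul_one]
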